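/- arXiv:2211.16533 — 3 statements merged into one kernel-verified Lean document; each statement's English description precedes it below -/
import Mathlib

section
/- (de Pillis) Let φ : M_n(ℂ) → M_m(ℂ) be linear and let ρ_φ = Σ_{i,j} E_{ij}* ⊗ φ(E_{ij}) where {E_{ij}} is the standard matrix unit basis. Then φ is Hermiticity-preserving (i.e. φ(a*) = φ(a)* for all a) if and only if ρ_φ is a Hermitian matrix in M_n(ℂ) ⊗ M_m(ℂ). -/
open Matrix Kronecker BigOperators

private lemma std_ct {n : ℕ} (i j : Fin n) :
    (Matrix.single i j (1 : ℂ))ᴴ = Matrix.single j i (1 : ℂ) := by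
  ext a b
  simp [Matrix.single, conjTranspose_apply, apply_ite, and_comm]

private lemma kron_ct {n m : ℕ} (A : Matrix (Fin n) (Fin n) ℂ)
    (B : Matrix (Fin m) (Fin m) ℂ) : (A ⊗ₖ B)ᴴ = Aᴴ ⊗ₖ Bᴴ := by
  ext ⟨a, b⟩ ⟨c, d⟩
  simp [conjTranspose_apply, kroneckerMap_apply, star_mul']

private lemma rho_apply {n m : ℕ} (F : Fin n → Fin n → Matrix (Fin m) (Fin m) ℂ)
    (p q : Fin n) (a b : Fin m) :
    (∑ i, ∑ j, (Matrix.single i j (1 : ℂ))ᴴ ⊗ₖ F i j) (p, a) (q, b) = F q p a b := by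
  simp only [Matrix.sum_apply, kroneckerMap_apply, std_ct, Matrix.single, of_apply]
  simp [Finset.sum_ite_eq', ite_and, apply_ite (starRingEnd ℂ)]

/-- de Pillis: φ is Hermiticity-preserving iff its Jamiołkowski matrix
`ρ_φ = Σ_{ij} E_{ij}* ⊗ φ(E_{ij})` is Hermitian. -/
theorem dePillis (n m : ℕ)
    (φ : Matrix (Fin n) (Fin n) ℂ →ₗ[ℂ] Matrix (Fin m) (Fin m) ℂ) :
    (∀ a : Matrix (Fin n) (Fin n) ℂ, φ aᴴ = (φ a)ᴴ) ↔
      (∑ i : Fin n, ∑ j : Fin n,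
        (Matrix.single i j (1 : ℂ))ᴴ ⊗ₖ φ (Matrix.single i j (1 : ℂ))).IsHermitian := by
  have hermiff : (∑ i : Fin n, ∑ j : Fin n,
      (Matrix.single i j (1 : ℂ))ᴴ ⊗ₖ φ (Matrix.single i j (1 : ℂ))).IsHermitian ↔
      ∀ p q : Fin n, (φ (Matrix.single p q 1))ᴴ = φ (Matrix.single q p 1) := by
    constructor
    · intro hH p q
      ext a b
      have h1 := congrFun (congrFun hH (q, b)) (p, a)
      rw [conjTranspose_apply, rho_apply, rho_apply] at h1
      rw [conjTranspose_apply, ← h1, star_star]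
    · intro hk
      ext ⟨p, a⟩ ⟨q, b⟩
      rw [conjTranspose_apply, rho_apply, ← hk, conjTranspose_apply, rho_apply, star_star]
  rw [hermiff]
  constructor
  · intro h p q
    rw [← h, std_ct]
  · intro hk a
    have expand : ∀ x : Matrix (Fin n) (Fin n) ℂ,
        φ x = ∑ i, ∑ j, x i j • φ (Matrix.single i j 1) := by
      intro x
      conv_lhs => rw [matrix_eq_sum_single x]
      have h2 : ∀ i j, Matrix.single i j (x i j) = x i j • Matrix.single i j (1 : ℂ) := by
        intro i j; rw [smul_single, smul_eq_mul, mul_one]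
      simp_rw [h2, map_sum, _root_.map_smul]
    rw [expand aᴴ, expand a]
    rw [conjTranspose_sum]
    simp_rw [conjTranspose_sum, conjTranspose_smul, hk]
    rw [Finset.sum_comm]
    simp [conjTranspose_apply]
end

section
/- (Jamiołkowski, part a) Let φ : M_n(ℂ) → M_m(ℂ) be linear and ρ_φ = Σ_{i,j} E_{ij}* ⊗ φ(E_{ij}). Then φ is a positive map (maps positive semidefinite matrices to positive semidefinite matrices) if and only if ρ_φ is positive on pure tensors, i.e. tr[ρ_φ (a ⊗ b)] ≥ 0 for all positive semidefinite a ∈ M_n(ℂ) and b ∈ M_m(ℂ). -/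
open Matrix Kronecker BigOperators ComplexOrder

lemma trace_stdBasis_mul (n : ℕ) (i j : Fin n) (a : Matrix (Fin n) (Fin n) ℂ) :
    ((Matrix.single i j (1 : ℂ))ᴴ * a).trace = a i j := by
  simp [Matrix.trace, Matrix.diag, Matrix.mul_apply, Matrix.single,
    Matrix.conjTranspose_apply, apply_ite (starRingEnd ℂ), ite_and, ite_mul, Finset.sum_ite_eq, Finset.sum_ite_eq']

lemma trace_mul_vecMulVec (m : ℕ) (M : Matrix (Fin m) (Fin m) ℂ) (x : Fin m → ℂ) :
    (M * vecMulVec x (star x)).trace = star x ⬝ᵥ M *ᵥ x := by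
  simp [Matrix.trace, Matrix.diag, Matrix.mul_apply, vecMulVec_apply, dotProduct,
    Matrix.mulVec, Finset.mul_sum]
  congr 1; ext k; congr 1; ext l; ring

lemma posSemidef_vecMulVec (m : ℕ) (x : Fin m → ℂ) :
    (vecMulVec x (star x)).PosSemidef := by
  refine PosSemidef.of_dotProduct_mulVec_nonneg ?_ ?_
  · ext i j; simp [Matrix.conjTranspose_apply, vecMulVec_apply, mul_comm]
  · intro y
    have : star y ⬝ᵥ (vecMulVec x (star x)) *ᵥ y = star (star x ⬝ᵥ y) * (star x ⬝ᵥ y) := by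
      simp [dotProduct, Matrix.mulVec, vecMulVec_apply, Finset.mul_sum, Finset.sum_mul,
        star_sum]
      rw [Finset.sum_comm]
      congr 1; ext k; congr 1; ext l; ring
    rw [this]
    exact star_mul_self_nonneg _

lemma star_single {m : ℕ} (k : Fin m) :
    star (Pi.single k (1 : ℂ) : Fin m → ℂ) = (Pi.single k 1 : Fin m → ℂ) := by
  ext l; simp [Pi.single_apply, apply_ite]

lemma psd_trace_nonneg {m : ℕ} {P : Matrix (Fin m) (Fin m) ℂ} (hP : P.PosSemidef) :
    0 ≤ P.trace := by
  have : P.trace = ∑ i, P i i := rfl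
  rw [this]
  refine Finset.sum_nonneg fun i _ => ?_
  have := hP.dotProduct_mulVec_nonneg (Pi.single i 1)
  simpa [star_single, single_dotProduct] using this

lemma quad_single {m : ℕ} (N : Matrix (Fin m) (Fin m) ℂ) (c : ℂ) (i j : Fin m) :
    star ((Pi.single i 1 : Fin m → ℂ) + c • (Pi.single j 1 : Fin m → ℂ)) ⬝ᵥ
        N *ᵥ ((Pi.single i 1 : Fin m → ℂ) + c • (Pi.single j 1 : Fin m → ℂ))
      = N i i + c * N i j + star c * N j i + star c * c * N j j := by
  simp [star_single, star_smul, star_add, add_dotProduct, smul_dotProduct, Matrix.mulVec_add,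
    Matrix.mulVec_smul, dotProduct_add, dotProduct_smul, Matrix.mulVec_single,
    single_dotProduct, smul_eq_mul]
  ring

lemma hermitian_of_quadratic {m : ℕ} (M : Matrix (Fin m) (Fin m) ℂ)
    (h : ∀ x : Fin m → ℂ, 0 ≤ star x ⬝ᵥ M *ᵥ x) : M.IsHermitian := by
  have hreal : ∀ x : Fin m → ℂ, star x ⬝ᵥ Mᴴ *ᵥ x = star x ⬝ᵥ M *ᵥ x := by
    intro x
    have h1 : star (star x ⬝ᵥ M *ᵥ x) = star x ⬝ᵥ M *ᵥ x := by
      have := h x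
      rw [Complex.le_def] at this
      rw [Complex.star_def, Complex.conj_eq_iff_im]
      simpa using this.2.symm
    rw [← h1]
    simp only [dotProduct, Matrix.mulVec, dotProduct, star_sum, star_mul',
      Matrix.conjTranspose_apply, Finset.mul_sum]
    rw [Finset.sum_comm]
    congr 1; ext k; congr 1; ext l; simp; ring
  set N := Mᴴ - M with hN
  have hq : ∀ x : Fin m → ℂ, star x ⬝ᵥ N *ᵥ x = 0 := by
    intro x
    simp [hN, Matrix.sub_mulVec, dotProduct_sub, hreal x]
  have diag : ∀ i, N i i = 0 := by
    intro i
    have := hq ((Pi.single i 1 : Fin m → ℂ) + (0 : ℂ) • (Pi.single i 1 : Fin m → ℂ))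
    rw [quad_single] at this
    simpa using this
  have hzero : ∀ i j, N i j = 0 := by
    intro i j
    have h1 := hq ((Pi.single i 1 : Fin m → ℂ) + (1 : ℂ) • (Pi.single j 1 : Fin m → ℂ))
    have h2 := hq ((Pi.single i 1 : Fin m → ℂ) + (Complex.I : ℂ) • (Pi.single j 1 : Fin m → ℂ))
    rw [quad_single] at h1 h2
    rw [diag i, diag j] at h1 h2
    simp [Complex.star_def, Complex.conj_I] at h1 h2
    have h3 : N i j - N j i = 0 := by
      have : Complex.I * (N i j - N j i) = 0 := by ring_nf; linear_combination h2
      exact (mul_eq_zero.mp this).resolve_left Complex.I_ne_zero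
    linear_combination (h1 + h3) / 2
  have : N = 0 := by ext i j; exact hzero i j
  have := sub_eq_zero.mp this
  exact this

lemma key_trace (n m : ℕ) (φ : Matrix (Fin n) (Fin n) ℂ →ₗ[ℂ] Matrix (Fin m) (Fin m) ℂ)
    (a : Matrix (Fin n) (Fin n) ℂ) (b : Matrix (Fin m) (Fin m) ℂ) :
    ((∑ i : Fin n, ∑ j : Fin n,
        (Matrix.single i j (1 : ℂ))ᴴ ⊗ₖ φ (Matrix.single i j (1 : ℂ))) * (a ⊗ₖ b)).trace
      = (φ a * b).trace := by
  have lhs : ((∑ i : Fin n, ∑ j : Fin n,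
        (Matrix.single i j (1 : ℂ))ᴴ ⊗ₖ φ (Matrix.single i j (1 : ℂ))) * (a ⊗ₖ b)).trace
      = ∑ i : Fin n, ∑ j : Fin n, a i j * (φ (Matrix.single i j (1 : ℂ)) * b).trace := by
    rw [Finset.sum_mul, Matrix.trace_sum]
    refine Finset.sum_congr rfl fun i _ => ?_
    rw [Finset.sum_mul, Matrix.trace_sum]
    refine Finset.sum_congr rfl fun j _ => ?_
    rw [← Matrix.mul_kronecker_mul, Matrix.trace_kronecker, trace_stdBasis_mul]
  rw [lhs]
  conv_rhs => rw [matrix_eq_sum_single a]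
  rw [map_sum, Finset.sum_mul, Matrix.trace_sum]
  refine Finset.sum_congr rfl fun i _ => ?_
  rw [map_sum, Finset.sum_mul, Matrix.trace_sum]
  refine Finset.sum_congr rfl fun j _ => ?_
  have : Matrix.single i j (a i j) = a i j • Matrix.single i j (1 : ℂ) := by
    rw [smul_single, smul_eq_mul, mul_one]
  rw [this, LinearMap.map_smul, Matrix.smul_mul, Matrix.trace_smul, smul_eq_mul]

/-- Jamiołkowski (a): φ is a positive map iff its Jamiołkowski matrix is
positive on pure tensors (block positive). -/
theorem jamiolkowski_positive_iff_POPT (n m : ℕ)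
    (φ : Matrix (Fin n) (Fin n) ℂ →ₗ[ℂ] Matrix (Fin m) (Fin m) ℂ) :
    (∀ a : Matrix (Fin n) (Fin n) ℂ, a.PosSemidef → (φ a).PosSemidef) ↔
      (∀ (a : Matrix (Fin n) (Fin n) ℂ) (b : Matrix (Fin m) (Fin m) ℂ),
        a.PosSemidef → b.PosSemidef →
        0 ≤ ((∑ i : Fin n, ∑ j : Fin n,
          (Matrix.single i j (1 : ℂ))ᴴ ⊗ₖ φ (Matrix.single i j (1 : ℂ))) * (a ⊗ₖ b)).trace) := by
  constructor
  · intro hpos a b ha hb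
    rw [key_trace]
    obtain ⟨c, rfl⟩ : ∃ c : Matrix (Fin m) (Fin m) ℂ, b = cᴴ * c := by
        open scoped MatrixOrder Matrix.Norms.L2Operator in
        obtain ⟨c, hc⟩ := CStarAlgebra.nonneg_iff_eq_star_mul_self.mp hb.nonneg
        exact ⟨c, hc⟩
    have h1 : (φ a * (cᴴ * c)).trace = (c * φ a * cᴴ).trace := by
      rw [show φ a * (cᴴ * c) = (φ a * cᴴ) * c by rw [Matrix.mul_assoc],
        Matrix.trace_mul_comm, Matrix.mul_assoc]
    rw [h1]
    exact psd_trace_nonneg ((hpos a ha).mul_mul_conjTranspose_same c)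
  · intro h a ha
    have hquad : ∀ x : Fin m → ℂ, 0 ≤ star x ⬝ᵥ (φ a) *ᵥ x := by
      intro x
      have := h a (vecMulVec x (star x)) ha (posSemidef_vecMulVec m x)
      rwa [key_trace, trace_mul_vecMulVec] at this
    exact PosSemidef.of_dotProduct_mulVec_nonneg (hermitian_of_quadratic _ hquad) hquad
end

section
/- (Choi) Let φ : M_n(ℂ) → M_m(ℂ) be linear and define the Choi matrix C(φ) = Σ_{i,j} E_{ij} ⊗ φ(E_{ij}). Then φ is completely positive (i.e. id_k ⊗ φ : M_k(ℂ) ⊗ M_n(ℂ) → M_k(ℂ) ⊗ M_m(ℂ) is positive for all k) if and only if C(φ) is a positive semidefinite matrix. -/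
open Matrix Kronecker BigOperators ComplexOrder

lemma sum_comm4 {M : Type*} [AddCommMonoid M] {a b c d : Type*}
    [Fintype a] [Fintype b] [Fintype c] [Fintype d] (f : a → b → c → d → M) :
    ∑ i, ∑ j, ∑ s, ∑ r, f i j s r = ∑ s, ∑ r, ∑ i, ∑ j, f i j s r :=
  calc ∑ i, ∑ j, ∑ s, ∑ r, f i j s r
      = ∑ i, ∑ s, ∑ j, ∑ r, f i j s r :=
        Finset.sum_congr rfl fun _ _ => Finset.sum_comm
    _ = ∑ s, ∑ i, ∑ j, ∑ r, f i j s r := Finset.sum_comm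
    _ = ∑ s, ∑ i, ∑ r, ∑ j, f i j s r :=
        Finset.sum_congr rfl fun _ _ => Finset.sum_congr rfl fun _ _ => Finset.sum_comm
    _ = ∑ s, ∑ r, ∑ i, ∑ j, f i j s r :=
        Finset.sum_congr rfl fun _ _ => Finset.sum_comm

open scoped MatrixOrder in
lemma posSemidef_iff_eq_transpose_mul_self {ι : Type*} [Fintype ι] [DecidableEq ι]
    {C : Matrix ι ι ℂ} : C.PosSemidef ↔ ∃ D : Matrix ι ι ℂ, C = Dᴴ * D := by
  constructor
  · intro hC
    obtain ⟨B, hB⟩ := CStarAlgebra.nonneg_iff_eq_star_mul_self.mp hC.nonneg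
    exact ⟨B, hB⟩
  · rintro ⟨D, rfl⟩
    exact posSemidef_conjTranspose_mul_self D

lemma phi_apply {n m : ℕ} (φ : Matrix (Fin n) (Fin n) ℂ →ₗ[ℂ] Matrix (Fin m) (Fin m) ℂ)
    (A : Matrix (Fin n) (Fin n) ℂ) (b d : Fin m) :
    φ A b d = ∑ i : Fin n, ∑ j : Fin n, A i j * φ (single i j 1) b d := by
  have h : A = ∑ i : Fin n, ∑ j : Fin n, (A i j) • single i j (1:ℂ) := by
    conv_lhs => rw [matrix_eq_sum_single A]
    refine Finset.sum_congr rfl fun i _ => Finset.sum_congr rfl fun j _ => ?_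
    rw [smul_single, smul_eq_mul, mul_one]
  conv_lhs => rw [h]
  rw [map_sum, Matrix.sum_apply]
  refine Finset.sum_congr rfl fun i _ => ?_
  rw [map_sum, Matrix.sum_apply]
  refine Finset.sum_congr rfl fun j _ => ?_
  rw [LinearMap.map_smul, Matrix.smul_apply, smul_eq_mul]

lemma choi_entry {n m : ℕ} (φ : Matrix (Fin n) (Fin n) ℂ →ₗ[ℂ] Matrix (Fin m) (Fin m) ℂ)
    (i j : Fin n) (b d : Fin m) :
    (∑ i' : Fin n, ∑ j' : Fin n,
        single i' j' (1 : ℂ) ⊗ₖ φ (single i' j' (1 : ℂ))) (i, b) (j, d)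
      = φ (single i j 1) b d := by
  simp [Matrix.sum_apply, single, ite_and, Finset.sum_ite_eq, Finset.sum_ite_eq']

/-- The map `id_k ⊗ φ` acting blockwise on matrices over `Fin k × Fin n`. -/
noncomputable def tensId {n m : ℕ} (k : ℕ)
    (φ : Matrix (Fin n) (Fin n) ℂ →ₗ[ℂ] Matrix (Fin m) (Fin m) ℂ)
    (X : Matrix (Fin k × Fin n) (Fin k × Fin n) ℂ) :
    Matrix (Fin k × Fin m) (Fin k × Fin m) ℂ :=
  fun p q => φ (fun i j => X (p.1, i) (q.1, j)) p.2 q.2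

/-- φ is completely positive if `id_k ⊗ φ` is positive for all k. -/
def CompletelyPositive {n m : ℕ}
    (φ : Matrix (Fin n) (Fin n) ℂ →ₗ[ℂ] Matrix (Fin m) (Fin m) ℂ) : Prop :=
  ∀ (k : ℕ) (X : Matrix (Fin k × Fin n) (Fin k × Fin n) ℂ),
    X.PosSemidef → (tensId k φ X).PosSemidef

/-- Choi's theorem: φ is completely positive iff its Choi matrix
`C(φ) = Σ_{ij} E_{ij} ⊗ φ(E_{ij})` is positive semidefinite. -/
theorem choi_theorem (n m : ℕ)
    (φ : Matrix (Fin n) (Fin n) ℂ →ₗ[ℂ] Matrix (Fin m) (Fin m) ℂ) :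
    CompletelyPositive φ ↔
      (∑ i : Fin n, ∑ j : Fin n,
        single i j (1 : ℂ) ⊗ₖ φ (single i j (1 : ℂ))).PosSemidef := by
  constructor
  · -- CP → Choi PSD
    intro h
    set X : Matrix (Fin n × Fin n) (Fin n × Fin n) ℂ :=
      fun p q => (if p.1 = p.2 then (1:ℂ) else 0) * (if q.1 = q.2 then 1 else 0) with hXdef
    have hX : X.PosSemidef := by
      refine posSemidef_iff_dotProduct_mulVec.mpr ⟨?_, ?_⟩
      · ext p q
        simp only [conjTranspose_apply]; simp only [hXdef]
        split_ifs <;> simp [mul_comm]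
      · intro x
        set s : ℂ := ∑ j : Fin n, x (j, j) with hs
        have inner : ∀ p : Fin n × Fin n,
            (X *ᵥ x) p = (if p.1 = p.2 then (1:ℂ) else 0) * s := by
          intro p
          simp only [mulVec, dotProduct, hXdef, mul_assoc, ← Finset.mul_sum]
          congr 1
          rw [Fintype.sum_prod_type]
          simp [Finset.sum_ite_eq, hs]
        have e1 : star x ⬝ᵥ (X *ᵥ x) = star s * s := by
          calc star x ⬝ᵥ (X *ᵥ x)
              = ∑ p : Fin n × Fin n, star (x p) * ((if p.1 = p.2 then (1:ℂ) else 0) * s) := by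
                simp only [dotProduct, inner, Pi.star_apply]
            _ = ∑ i : Fin n, ∑ jj : Fin n,
                  star (x (i, jj)) * ((if i = jj then (1:ℂ) else 0) * s) := by
                rw [Fintype.sum_prod_type]
            _ = ∑ i : Fin n, star (x (i, i)) * s := by
                refine Finset.sum_congr rfl fun i _ => ?_
                simp [mul_ite, ite_mul, Finset.sum_ite_eq]
            _ = (∑ i : Fin n, star (x (i, i))) * s := by rw [Finset.sum_mul]
            _ = star s * s := by rw [hs, star_sum]
        rw [e1]
        exact star_mul_self_nonneg _
    have he : (∑ i : Fin n, ∑ j : Fin n,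
        single i j (1 : ℂ) ⊗ₖ φ (single i j (1 : ℂ))) = tensId n φ X := by
      ext ⟨i, b⟩ ⟨j, d⟩
      rw [choi_entry]
      show _ = φ (fun i' j' => X ((i, i')) ((j, j'))) b d
      have hEq : single i j (1:ℂ) = (fun i' j' => X ((i, i')) ((j, j'))) := by
        funext i' j'
        by_cases h1 : i = i' <;> by_cases h2 : j = j' <;>
          simp [h1, h2, single, hXdef]
      rw [hEq]
    rw [he]
    exact h n X hX
  · -- Choi PSD → CP
    intro hC k X hX
    obtain ⟨D, hD⟩ := posSemidef_iff_eq_transpose_mul_self.mp hC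
    obtain ⟨A, hA⟩ := posSemidef_iff_eq_transpose_mul_self.mp hX
    set K : Matrix ((Fin k × Fin n) × (Fin n × Fin m)) (Fin k × Fin m) ℂ :=
      fun x q => ∑ j : Fin n, D x.2 (j, q.2) * A x.1 (q.1, j) with hKdef
    have key : tensId k φ X = Kᴴ * K := by
      ext ⟨a, b⟩ ⟨c, d⟩
      show φ (fun i j => X ((a, i)) ((c, j))) b d = _
      refine (phi_apply φ _ b d).trans ?_
      have hXe : ∀ i j : Fin n, X ((a, i)) ((c, j))
          = ∑ s : Fin k × Fin n, star (A s (a, i)) * A s (c, j) := by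
        intro i j; rw [hA]; simp [Matrix.mul_apply, conjTranspose_apply]
      have hCe : ∀ i j : Fin n, φ (single i j 1) b d
          = ∑ r : Fin n × Fin m, star (D r (i, b)) * D r (j, d) := by
        intro i j; rw [← choi_entry φ, hD]; simp [Matrix.mul_apply, conjTranspose_apply]
      simp only [hXe, hCe, Finset.sum_mul_sum]
      rw [Matrix.mul_apply, Fintype.sum_prod_type, sum_comm4]
      refine Finset.sum_congr rfl fun s _ => Finset.sum_congr rfl fun r _ => ?_
      simp only [conjTranspose_apply]; simp only [hKdef, star_sum, star_mul', Finset.sum_mul_sum]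
      refine Finset.sum_congr rfl fun i _ => Finset.sum_congr rfl fun j _ => ?_
      ring
    rw [key]
    exact posSemidef_conjTranspose_mul_self K
end
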